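/- arXiv:1109.6426 — 2 statements merged into one kernel-verified Lean document; each statement's English description precedes it below -/
import Mathlib

section
/- Let (λ₁, x₁) with ‖x₁‖ = 1 be an eigenpair of the quadratic pencil, i.e., (λ₁²M + λ₁D + K)x₁ = 0, with λ₁ ≠ 0. Let Q have orthonormal columns, [Q, Q⊥] be unitary, q₁ = Qᴴx₁ ≠ 0, q̂₁ = q₁/‖q₁‖, and set M̂ = QᴴMQ, D̂ = QᴴDQ, K̂ = QᴴKQ. Then the residual r₁ = (λ₁²M̂ + λ₁D̂ + K̂)q̂₁ satisfies ‖r₁‖ ≤ (|λ₁|²‖M‖ + |λ₁|‖D‖ + ‖K‖) tan θ₁, where sin θ₁ = ‖(Q⊥)ᴴx₁‖ and cos θ₁ = ‖q₁‖. -/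
open Matrix Polynomial

/-- Euclidean norm of a complex vector. -/
noncomputable def vnorm {ι : Type*} [Fintype ι] (x : ι → ℂ) : ℝ :=
  Real.sqrt (∑ i, ‖x i‖ ^ 2)

/-- Spectral norm (operator 2-norm) of a complex matrix. -/
noncomputable def spec {ι κ : Type*} [Fintype ι] [Fintype κ] [DecidableEq κ]
    (A : Matrix ι κ ℂ) : ℝ :=
  ‖LinearMap.toContinuousLinearMap (Matrix.toEuclideanLin A)‖

/-- Sine of the angle between two vectors: distance from a/‖a‖ to span{b}. -/
noncomputable def sAngle {ι : Type*} [Fintype ι] (a b : ι → ℂ) : ℝ :=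
  ⨅ α : ℂ, vnorm ((vnorm a)⁻¹ • a - α • b)

section aux

variable {ι κ : Type*} [Fintype ι] [Fintype κ]

lemma vnorm_nonneg (x : ι → ℂ) : 0 ≤ vnorm x := Real.sqrt_nonneg _

lemma vnorm_eq_norm (x : ι → ℂ) :
    vnorm x = ‖(WithLp.equiv 2 (ι → ℂ)).symm x‖ := by
  rw [EuclideanSpace.norm_eq]; rfl

lemma vnorm_sq (x : ι → ℂ) : vnorm x ^ 2 = (star x ⬝ᵥ x).re := by
  rw [vnorm, Real.sq_sqrt (by positivity), dotProduct, Complex.re_sum]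
  refine Finset.sum_congr rfl fun i _ => ?_
  simp [Complex.mul_re, Complex.sq_norm, Complex.normSq_apply]

lemma vnorm_pos (x : ι → ℂ) (h : x ≠ 0) : 0 < vnorm x := by
  rw [vnorm_eq_norm, norm_pos_iff]
  intro h0
  exact h ((WithLp.equiv 2 (ι → ℂ)).symm.injective h0)

lemma vnorm_smul (c : ℝ) (x : ι → ℂ) : vnorm (c • x) = |c| * vnorm x := by
  simp only [vnorm, Pi.smul_apply, norm_smul, Real.norm_eq_abs, mul_pow]
  rw [← Finset.mul_sum, Real.sqrt_mul (by positivity), Real.sqrt_sq_eq_abs, abs_abs]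

lemma vnorm_neg (x : ι → ℂ) : vnorm (-x) = vnorm x := by
  simp [vnorm]

lemma vnorm_mulVec_isometry {a b : ℕ} (A : Matrix (Fin a) (Fin b) ℂ)
    (h : Aᴴ * A = 1) (v : Fin b → ℂ) : vnorm (A *ᵥ v) = vnorm v := by
  have h2 : vnorm (A *ᵥ v) ^ 2 = vnorm v ^ 2 := by
    rw [vnorm_sq, vnorm_sq, star_mulVec, Matrix.dotProduct_mulVec,
      Matrix.vecMul_vecMul, h, Matrix.vecMul_one]
  calc vnorm (A *ᵥ v) = Real.sqrt (vnorm (A *ᵥ v) ^ 2) :=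
        (Real.sqrt_sq (vnorm_nonneg _)).symm
    _ = Real.sqrt (vnorm v ^ 2) := by rw [h2]
    _ = vnorm v := Real.sqrt_sq (vnorm_nonneg _)

lemma vnorm_mulVec_conjTranspose_le {a b c : ℕ}
    (Q : Matrix (Fin a) (Fin b) ℂ) (Qp : Matrix (Fin a) (Fin c) ℂ)
    (h : Q * Qᴴ + Qp * Qpᴴ = 1) (y : Fin a → ℂ) :
    vnorm (Qᴴ *ᵥ y) ≤ vnorm y := by
  have key : vnorm (Qᴴ *ᵥ y) ^ 2 + vnorm (Qpᴴ *ᵥ y) ^ 2 = vnorm y ^ 2 := by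
    rw [vnorm_sq, vnorm_sq, vnorm_sq, star_mulVec, star_mulVec,
      Matrix.dotProduct_mulVec, Matrix.dotProduct_mulVec,
      Matrix.vecMul_vecMul, Matrix.vecMul_vecMul, conjTranspose_conjTranspose,
      conjTranspose_conjTranspose, ← Complex.add_re, ← add_dotProduct,
      ← Matrix.vecMul_add, h, Matrix.vecMul_one]
  have h2 : vnorm (Qᴴ *ᵥ y) ^ 2 ≤ vnorm y ^ 2 := by
    nlinarith [vnorm_nonneg (Qpᴴ *ᵥ y), sq_nonneg (vnorm (Qpᴴ *ᵥ y))]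
  calc vnorm (Qᴴ *ᵥ y) = Real.sqrt (vnorm (Qᴴ *ᵥ y) ^ 2) :=
        (Real.sqrt_sq (vnorm_nonneg _)).symm
    _ ≤ Real.sqrt (vnorm y ^ 2) := Real.sqrt_le_sqrt h2
    _ = vnorm y := Real.sqrt_sq (vnorm_nonneg _)

lemma vnorm_mulVec_le {a b : ℕ} (A : Matrix (Fin a) (Fin b) ℂ) (v : Fin b → ℂ) :
    vnorm (A *ᵥ v) ≤ spec A * vnorm v := by
  have := (LinearMap.toContinuousLinearMap (Matrix.toEuclideanLin A)).le_opNorm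
    ((WithLp.equiv 2 (Fin b → ℂ)).symm v)
  simpa [vnorm_eq_norm, spec, Matrix.toEuclideanLin_apply_piLp_toLp] using this

lemma spec_nonneg {a b : ℕ} (A : Matrix (Fin a) (Fin b) ℂ) : 0 ≤ spec A :=
  norm_nonneg _

lemma spec_add_le {a b : ℕ} (A B : Matrix (Fin a) (Fin b) ℂ) :
    spec (A + B) ≤ spec A + spec B := by
  simp only [spec, map_add]
  exact norm_add_le _ _

lemma spec_smul (c : ℂ) {a b : ℕ} (A : Matrix (Fin a) (Fin b) ℂ) :
    spec (c • A) = ‖c‖ * spec A := by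
  unfold spec
  rw [_root_.map_smul, _root_.map_smul]
  exact (norm_smul (β := EuclideanSpace ℂ (Fin b) →L[ℂ] EuclideanSpace ℂ (Fin a)) c
    (LinearMap.toContinuousLinearMap (Matrix.toEuclideanLin A))).trans
    (by rfl)

end aux

set_option maxHeartbeats 1000000 in
theorem stmt2 {n m : ℕ} (M D K : Matrix (Fin n) (Fin n) ℂ)
    (Q : Matrix (Fin n) (Fin m) ℂ) (Qp : Matrix (Fin n) (Fin (n - m)) ℂ)
    (hQ : Qᴴ * Q = 1)
    (hU1 : (Matrix.fromCols Q Qp)ᴴ * Matrix.fromCols Q Qp = 1)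
    (hU2 : Matrix.fromCols Q Qp * (Matrix.fromCols Q Qp)ᴴ = 1)
    (lam : ℂ) (x : Fin n → ℂ) (hx : vnorm x = 1) (hlam : lam ≠ 0)
    (heig : (lam ^ 2 • M + lam • D + K) *ᵥ x = 0)
    (hq : Qᴴ *ᵥ x ≠ 0) :
    vnorm ((lam ^ 2 • (Qᴴ * M * Q) + lam • (Qᴴ * D * Q) + Qᴴ * K * Q) *ᵥ
        ((vnorm (Qᴴ *ᵥ x))⁻¹ • (Qᴴ *ᵥ x)))
      ≤ (‖lam‖ ^ 2 * spec M + ‖lam‖ * spec D + spec K) *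
        (vnorm (Qpᴴ *ᵥ x) / vnorm (Qᴴ *ᵥ x)) := by
  set P : Matrix (Fin n) (Fin n) ℂ := lam ^ 2 • M + lam • D + K with hP
  set q : Fin m → ℂ := Qᴴ *ᵥ x with hqdef
  set p : Fin (n - m) → ℂ := Qpᴴ *ᵥ x with hpdef
  clear_value P q p
  -- projector identity
  have hproj : Q * Qᴴ + Qp * Qpᴴ = 1 := by
    rw [Matrix.conjTranspose_fromCols_eq_fromRows_conjTranspose,
      Matrix.fromCols_mul_fromRows] at hU2
    exact hU2
  -- Qp has orthonormal columns
  have hQp : Qpᴴ * Qp = 1 := by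
    rw [Matrix.conjTranspose_fromCols_eq_fromRows_conjTranspose,
      Matrix.fromRows_mul_fromCols] at hU1
    have h1 : Matrix.toBlocks₂₂
        (1 : Matrix (Fin m ⊕ Fin (n - m)) (Fin m ⊕ Fin (n - m)) ℂ) = 1 := by
      rw [← Matrix.fromBlocks_one, Matrix.toBlocks_fromBlocks₂₂]
    have h2 := congrArg Matrix.toBlocks₂₂ hU1
    rwa [Matrix.toBlocks_fromBlocks₂₂, h1] at h2
  -- decomposition of x
  have hxdec : Q *ᵥ q + Qp *ᵥ p = x := by
    rw [hqdef, hpdef, Matrix.mulVec_mulVec, Matrix.mulVec_mulVec,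
      ← Matrix.add_mulVec, hproj, Matrix.one_mulVec]
  -- the reduced matrix is Qᴴ P Q
  have hred : lam ^ 2 • (Qᴴ * M * Q) + lam • (Qᴴ * D * Q) + Qᴴ * K * Q
      = Qᴴ * P * Q := by
    rw [hP]
    simp only [Matrix.mul_add, Matrix.add_mul, Matrix.mul_smul, Matrix.smul_mul]
  -- key residual identity
  have hkey : (Qᴴ * P * Q) *ᵥ q = -(Qᴴ *ᵥ (P *ᵥ (Qp *ᵥ p))) := by
    have h1 : (Qᴴ * P * Q) *ᵥ q = Qᴴ *ᵥ (P *ᵥ (Q *ᵥ q)) := by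
      rw [Matrix.mulVec_mulVec, Matrix.mulVec_mulVec, Matrix.mul_assoc]
    have h2 : Q *ᵥ q = x - Qp *ᵥ p := by rw [eq_sub_iff_add_eq, hxdec]
    rw [h1, h2, Matrix.mulVec_sub, heig, zero_sub, Matrix.mulVec_neg]
  have hq0 : 0 < vnorm q := vnorm_pos q hq
  have hc : (0:ℝ) ≤ (vnorm q)⁻¹ := by positivity
  -- spec bound on P
  have hspecP : spec P ≤ ‖lam‖ ^ 2 * spec M + ‖lam‖ * spec D + spec K := by
    rw [hP]
    calc spec (lam ^ 2 • M + lam • D + K)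
        ≤ spec (lam ^ 2 • M + lam • D) + spec K := spec_add_le _ _
      _ ≤ (spec (lam ^ 2 • M) + spec (lam • D)) + spec K := by
          have := spec_add_le (lam ^ 2 • M) (lam • D)
          linarith
      _ = ‖lam‖ ^ 2 * spec M + ‖lam‖ * spec D + spec K := by
          rw [spec_smul, spec_smul, norm_pow]
  -- main chain
  rw [hred, Matrix.mulVec_smul, vnorm_smul, hkey, vnorm_neg,
    abs_of_nonneg hc]
  have step1 : vnorm (Qᴴ *ᵥ (P *ᵥ (Qp *ᵥ p))) ≤ vnorm (P *ᵥ (Qp *ᵥ p)) :=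
    vnorm_mulVec_conjTranspose_le Q Qp hproj _
  have step2 : vnorm (P *ᵥ (Qp *ᵥ p)) ≤ spec P * vnorm (Qp *ᵥ p) :=
    vnorm_mulVec_le _ _
  have step3 : vnorm (Qp *ᵥ p) = vnorm p := vnorm_mulVec_isometry Qp hQp p
  have hpn : 0 ≤ vnorm p := vnorm_nonneg p
  have chain : vnorm (Qᴴ *ᵥ (P *ᵥ (Qp *ᵥ p))) ≤
      (‖lam‖ ^ 2 * spec M + ‖lam‖ * spec D + spec K) * vnorm p := by
    calc vnorm (Qᴴ *ᵥ (P *ᵥ (Qp *ᵥ p))) ≤ spec P * vnorm (Qp *ᵥ p) := le_trans step1 step2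
      _ = spec P * vnorm p := by rw [step3]
      _ ≤ (‖lam‖ ^ 2 * spec M + ‖lam‖ * spec D + spec K) * vnorm p :=
          mul_le_mul_of_nonneg_right hspecP hpn
  calc (vnorm q)⁻¹ * vnorm (Qᴴ *ᵥ (P *ᵥ (Qp *ᵥ p)))
      ≤ (vnorm q)⁻¹ * ((‖lam‖ ^ 2 * spec M + ‖lam‖ * spec D + spec K) * vnorm p) :=
        mul_le_mul_of_nonneg_left chain hc
    _ = (‖lam‖ ^ 2 * spec M + ‖lam‖ * spec D + spec K) * (vnorm p / vnorm q) := by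
        rw [div_eq_mul_inv]
        ring
end

section
/- Let x₁ ∈ ℂⁿ be a unit vector, λ₁ ∈ ℂ, and v₁ = [λ₁x₁; x₁]/√(1 + |λ₁|²) ∈ ℂ^{2n}. Let Q ∈ ℂ^{n×m} have orthonormal columns and W = diag(Q, Q) ∈ ℂ^{2n×2m}. Then the angle between v₁ and span{W} equals the angle θ₁ between x₁ and span{Q}; that is, ‖(I_{2n} − WWᴴ)v₁‖ = sin θ₁ = ‖(I_n − QQᴴ)x₁‖. -/
open Matrix Polynomial

theorem stmt7 {n m : ℕ} (x1 : Fin n → ℂ) (hx : vnorm x1 = 1) (lam1 : ℂ)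
    (Q : Matrix (Fin n) (Fin m) ℂ) (hQ : Qᴴ * Q = 1)
    (W : Matrix (Fin n ⊕ Fin n) (Fin m ⊕ Fin m) ℂ)
    (hW : W = Matrix.fromBlocks Q 0 0 Q)
    (v1 : Fin n ⊕ Fin n → ℂ)
    (hv : v1 = (Real.sqrt (1 + ‖lam1‖ ^ 2) : ℂ)⁻¹ • Sum.elim (lam1 • x1) x1) :
    vnorm (v1 - (W * Wᴴ) *ᵥ v1) = vnorm (x1 - (Q * Qᴴ) *ᵥ x1) := by
  subst hW hv
  have harg : (0:ℝ) < 1 + ‖lam1‖ ^ 2 := by positivity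
  set c : ℝ := Real.sqrt (1 + ‖lam1‖ ^ 2) with hcdef
  have hc : (0:ℝ) < c := Real.sqrt_pos.mpr harg
  have hc2 : c ^ 2 = 1 + ‖lam1‖ ^ 2 := Real.sq_sqrt harg.le
  set r : Fin n → ℂ := x1 - (Q * Qᴴ) *ᵥ x1 with hr
  have hpoint :
      ((c:ℂ)⁻¹ • Sum.elim (lam1 • x1) x1 -
        (fromBlocks Q 0 0 Q * (fromBlocks Q 0 0 Q)ᴴ) *ᵥ
          ((c:ℂ)⁻¹ • Sum.elim (lam1 • x1) x1)) =
      (c:ℂ)⁻¹ • Sum.elim (lam1 • r) r := by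
    funext i
    cases i <;>
      simp [fromBlocks_conjTranspose, fromBlocks_multiply, fromBlocks_mulVec,
        mulVec_smul, hr, mulVec_sub, smul_sub, Pi.sub_apply, Pi.smul_apply,
        smul_eq_mul] <;> ring
  rw [hpoint]
  have hS : ∀ i : Fin n, (0:ℝ) ≤ ‖r i‖ ^ 2 := fun i => by positivity
  unfold vnorm
  rw [Fintype.sum_sum_type]
  have hnorm : ‖((c:ℂ)⁻¹)‖ = c⁻¹ := by
    rw [norm_inv, Complex.norm_real, Real.norm_of_nonneg hc.le]
  have h1 : ∀ i : Fin n,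
      ‖((c:ℂ)⁻¹ • Sum.elim (lam1 • r) r) (Sum.inl i)‖ ^ 2 =
        c⁻¹ ^ 2 * (‖lam1‖ ^ 2 * ‖r i‖ ^ 2) := by
    intro i
    simp [Pi.smul_apply, smul_eq_mul, norm_mul, hnorm, mul_pow]
  have h2 : ∀ i : Fin n,
      ‖((c:ℂ)⁻¹ • Sum.elim (lam1 • r) r) (Sum.inr i)‖ ^ 2 =
        c⁻¹ ^ 2 * ‖r i‖ ^ 2 := by
    intro i
    simp [Pi.smul_apply, smul_eq_mul, norm_mul, hnorm, mul_pow]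
  simp only [h1, h2]
  rw [← Finset.mul_sum, ← Finset.mul_sum, ← Finset.mul_sum, ← mul_add]
  congr 1
  have hS' : c ^ 2 * (c⁻¹ ^ 2) = 1 := by
    field_simp
  have : c⁻¹ ^ 2 = (1 + ‖lam1‖ ^ 2)⁻¹ := by
    rw [← hc2, inv_pow]
  rw [this]
  field_simp
  ring
end
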